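/- Representer property for the nuclear-norm SDP: in a finite-dimensional feature space ℝ^d, for any symmetric PSD matrix A feasible for the constraints φ_{x_i}⊤ A φ_{x_i} ≥ y_i², the projected matrix A' = P A P, where P is the orthogonal projection onto span{φ_{x_1},…,φ_{x_n}}, is also PSD, satisfies the same constraints, and has Tr(A') ≤ Tr(A). -/

import Mathlib

open Matrix

lemma psd_trace_nonneg {d : ℕ} {M : Matrix (Fin d) (Fin d) ℝ} (hM : M.PosSemidef) :
    0 ≤ M.trace := by
  apply Finset.sum_nonneg
  intro i _
  have := hM.dotProduct_mulVec_nonneg (Pi.single i 1)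
  simpa [dotProduct, mulVec, Pi.single_apply, Finset.sum_ite_eq] using this

theorem representer_projection (n d : ℕ) (φ : Fin n → (Fin d → ℝ)) (y : Fin n → ℝ)
    (A P : Matrix (Fin d) (Fin d) ℝ) (hA : A.PosSemidef)
    (hfeas : ∀ i, y i ^ 2 ≤ φ i ⬝ᵥ A.mulVec (φ i))
    (hPidem : P * P = P) (hPsym : Pᵀ = P)
    (hPφ : ∀ i, P.mulVec (φ i) = φ i) :
    (P * A * P).PosSemidef ∧ (∀ i, y i ^ 2 ≤ φ i ⬝ᵥ (P * A * P).mulVec (φ i)) ∧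
      (P * A * P).trace ≤ A.trace := by
  have hPH : Pᴴ = P := by rw [conjTranspose_eq_transpose_of_trivial]; exact hPsym
  refine ⟨?_, ?_, ?_⟩
  · have := hA.mul_mul_conjTranspose_same P
    rwa [hPH] at this
  · intro i
    have : φ i ⬝ᵥ (P * A * P).mulVec (φ i) = φ i ⬝ᵥ A.mulVec (φ i) := by
      rw [← mulVec_mulVec, ← mulVec_mulVec, hPφ i, dotProduct_mulVec,
        ← mulVec_transpose, hPsym, hPφ]
    rw [this]; exact hfeas i
  · -- trace A = trace (PAP) + trace (QAQ), Q = 1 - P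
    set Q := (1 : Matrix (Fin d) (Fin d) ℝ) - P with hQ
    have hQH : Qᴴ = Q := by simp [hQ, conjTranspose_sub, hPH, hPsym]
    have hQAQ : (Q * A * Q).PosSemidef := by
      have := hA.mul_mul_conjTranspose_same Q
      rwa [hQH] at this
    have hsplit : A.trace = (P * A * P).trace + (Q * A * Q).trace := by
      have hPQ : P * Q = 0 := by simp [hQ, mul_sub, hPidem]
      have hQP : Q * P = 0 := by simp [hQ, sub_mul, hPidem]
      have hexp : A = (P + Q) * A * (P + Q) := by simp [hQ]
      calc A.trace = ((P + Q) * A * (P + Q)).trace := by rw [← hexp]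
        _ = (P * A * P).trace + (Q * A * Q).trace := by
            simp only [add_mul, mul_add, trace_add]
            have h1 : (P * A * Q).trace = 0 := by
              rw [trace_mul_comm, ← mul_assoc, hQP]; simp
            have h2 : (Q * A * P).trace = 0 := by
              rw [trace_mul_comm, ← mul_assoc, hPQ]; simp
            simp only [h1, h2]; ring
    rw [hsplit]
    linarith [psd_trace_nonneg hQAQ]
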